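/- Let X and Y be Banach spaces over 𝕂 (= ℝ or ℂ) and let T : X → Y be a bounded linear operator that quasi attains its norm. If every continuous linear functional x* ∈ X* that vanishes on ker T attains its norm (i.e., the annihilator (ker T)^⊥ is contained in NA(X,𝕂)), then T attains its norm: there exists x₀ with ‖x₀‖ = 1 and ‖T x₀‖ = ‖T‖. -/

import Mathlib

/-- if `T` quasi attains its norm and every continuous linear functional vanishing
on `ker T` attains its norm (i.e. `(ker T)^⊥ ⊆ NA(X,𝕜)`), then `T` attains its norm. -/
theorem quasi_attains_annihilator_norm_attaining_implies_attains
    {𝕜 X Y : Type*} [RCLike 𝕜]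
    [NormedAddCommGroup X] [NormedSpace 𝕜 X] [CompleteSpace X]
    [NormedAddCommGroup Y] [NormedSpace 𝕜 Y] [CompleteSpace Y]
    (T : X →L[𝕜] Y)
    (hQNA : ∃ u ∈ closure (⇑T '' Metric.closedBall 0 1), ‖u‖ = ‖T‖)
    (hann : ∀ f : X →L[𝕜] 𝕜, (∀ z ∈ LinearMap.ker (T : X →ₗ[𝕜] Y), f z = 0) →
      ∃ x : X, ‖x‖ = 1 ∧ ‖f x‖ = ‖f‖) :
    ∃ x₀ : X, ‖x₀‖ = 1 ∧ ‖T x₀‖ = ‖T‖ := by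
  obtain ⟨u, hu, hnorm⟩ := hQNA
  by_cases hT : ‖T‖ = 0
  · obtain ⟨x, hx, -⟩ := hann 0 (fun z _ => rfl)
    refine ⟨x, hx, ?_⟩
    have : T = 0 := norm_eq_zero.mp hT
    simp [this, hT]
  · have hu0 : u ≠ 0 := by
      intro h
      exact hT (by simpa [h] using hnorm.symm)
    obtain ⟨g, hg1, hgu⟩ := exists_dual_vector 𝕜 u (norm_ne_zero_iff.mpr hu0)
    set f : X →L[𝕜] 𝕜 := g.comp T with hf
    have hfle : ‖f‖ ≤ ‖T‖ := by
      calc ‖f‖ ≤ ‖g‖ * ‖T‖ := ContinuousLinearMap.opNorm_comp_le _ _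
        _ = ‖T‖ := by rw [hg1, one_mul]
    have hge : ‖T‖ ≤ ‖f‖ := by
      have hsub : closure (⇑T '' Metric.closedBall 0 1) ⊆ {v : Y | ‖g v‖ ≤ ‖f‖} := by
        apply closure_minimal
        · rintro v ⟨x, hx, rfl⟩
          have hx1 : ‖x‖ ≤ 1 := by simpa using Metric.mem_closedBall.mp hx
          calc ‖g (T x)‖ = ‖f x‖ := rfl
            _ ≤ ‖f‖ * ‖x‖ := f.le_opNorm x
            _ ≤ ‖f‖ * 1 := by
                exact mul_le_mul_of_nonneg_left hx1 (norm_nonneg _)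
            _ = ‖f‖ := mul_one _
        · exact isClosed_le (by continuity) continuous_const
      have := hsub hu
      simp only [Set.mem_setOf_eq, hgu] at this
      calc ‖T‖ = ‖u‖ := hnorm.symm
        _ = ‖((‖u‖ : ℝ) : 𝕜)‖ := by simp
        _ ≤ ‖f‖ := this
    have hfeq : ‖f‖ = ‖T‖ := le_antisymm hfle hge
    have hker : ∀ z ∈ LinearMap.ker (T : X →ₗ[𝕜] Y), f z = 0 := by
      intro z hz
      have : T z = 0 := hz
      simp [hf, this]
    obtain ⟨x₀, hx₀, hfx₀⟩ := hann f hker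
    refine ⟨x₀, hx₀, le_antisymm (by simpa [hx₀] using T.le_opNorm x₀) ?_⟩
    calc ‖T‖ = ‖f x₀‖ := by rw [hfx₀, hfeq]
      _ = ‖g (T x₀)‖ := rfl
      _ ≤ ‖g‖ * ‖T x₀‖ := g.le_opNorm _
      _ = ‖T x₀‖ := by rw [hg1, one_mul]
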